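/- Zero-Derivative Principle in boundary-value form for the linear model: let γ > 0, m ≥ 1, t₀ < t_f, β ∈ ℝ with β ≠ 0. The solution z of the linear model determined by the two conditions z₂(t_f) = β and ∂_t^m z₁(t₀) = 0 exists, is unique, and satisfies z₁(t_f) = β·[1 + 2(−1)^{m+1}·e^{(−1−γ)t_f}/((−1)^m·e^{(−1−γ)t_f} + (−1−γ)^m·e^{−γt₀}·e^{−t_f})]. Consequently z₁(t_f) → β in each of the three limits m → ∞ (γ, t₀, t_f, β fixed), t₀ → −∞ (γ, m, t_f, β fixed), and γ → ∞ (m, t₀ < t_f, β fixed). -/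

import Mathlib

open Real Filter

lemma exp_ode_sol (f : ℝ → ℝ) (k : ℝ) (hf : ∀ t, HasDerivAt f (k * f t) t) :
    ∀ t, f t = f 0 * exp (k * t) := by
  have hd : ∀ t, HasDerivAt (fun t => f t * exp (-k * t)) 0 t := by
    intro t
    have he : HasDerivAt (fun t : ℝ => exp (-k * t)) (exp (-k * t) * (-k)) t := by
      simpa using ((hasDerivAt_id t).const_mul (-k)).exp
    have := (hf t).mul he
    exact this.congr_deriv (by ring)
  have hc : ∀ t, f t * exp (-k * t) = f 0 * exp (-k * 0) := by
    intro t
    exact is_const_of_deriv_eq_zero (fun x => (hd x).differentiableAt) (fun x => (hd x).deriv) t 0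
  intro t
  have h := hc t
  simp only [mul_zero, exp_zero, mul_one] at h
  rw [← h, mul_assoc, ← exp_add]
  have : -k * t + k * t = 0 := by ring
  rw [this, exp_zero, mul_one]

lemma iter2 (a b r s : ℝ) (m : ℕ) (t : ℝ) :
    iteratedDeriv m (fun t => a * exp (r * t) + b * exp (s * t)) t
      = a * r ^ m * exp (r * t) + b * s ^ m * exp (s * t) := by
  induction m generalizing t with
  | zero => simp
  | succ n ih =>
    rw [iteratedDeriv_succ]
    have h : iteratedDeriv n (fun t => a * exp (r * t) + b * exp (s * t))
        = fun t => a * r ^ n * exp (r * t) + b * s ^ n * exp (s * t) := funext ih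
    rw [h]
    have h1 : HasDerivAt (fun t : ℝ => exp (r * t)) (exp (r * t) * r) t := by
      simpa using ((hasDerivAt_id t).const_mul r).exp
    have h2 : HasDerivAt (fun t : ℝ => exp (s * t)) (exp (s * t) * s) t := by
      simpa using ((hasDerivAt_id t).const_mul s).exp
    have hd : HasDerivAt (fun t => a * r ^ n * exp (r * t) + b * s ^ n * exp (s * t))
        (a * r ^ (n + 1) * exp (r * t) + b * s ^ (n + 1) * exp (s * t)) t := by
      have := ((h1.const_mul (a * r ^ n)).add (h2.const_mul (b * s ^ n)))
      exact this.congr_deriv (by ring)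
    exact hd.deriv

lemma rep (γ : ℝ) (z₁ z₂ : ℝ → ℝ)
    (hz : ∀ t, HasDerivAt z₁ ((-1 - γ / 2) * z₁ t + (γ / 2) * z₂ t) t ∧
               HasDerivAt z₂ ((γ / 2) * z₁ t + (-1 - γ / 2) * z₂ t) t) :
    ∃ a b : ℝ, ∀ t, z₁ t = a * exp ((-1) * t) + b * exp ((-1 - γ) * t) ∧
                     z₂ t = a * exp ((-1) * t) - b * exp ((-1 - γ) * t) := by
  have hu : ∀ t, HasDerivAt (fun t => z₁ t + z₂ t) ((-1) * (z₁ t + z₂ t)) t := by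
    intro t; have := (hz t).1.add (hz t).2; exact this.congr_deriv (by ring)
  have hv : ∀ t, HasDerivAt (fun t => z₁ t - z₂ t) ((-1 - γ) * (z₁ t - z₂ t)) t := by
    intro t; have := (hz t).1.sub (hz t).2; exact this.congr_deriv (by ring)
  have hu' := exp_ode_sol _ _ hu
  have hv' := exp_ode_sol _ _ hv
  refine ⟨(z₁ 0 + z₂ 0) / 2, (z₁ 0 - z₂ 0) / 2, fun t => ⟨?_, ?_⟩⟩
  · have h1 := hu' t; have h2 := hv' t
    linear_combination h1 / 2 + h2 / 2
  · have h1 := hu' t; have h2 := hv' t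
    linear_combination h1 / 2 - h2 / 2

lemma lim_helper {α : Type*} {F : Filter α} (β : ℝ) (R : α → ℝ) (hR : Tendsto R F atTop) :
    Tendsto (fun x => β * (1 + (-2) / (1 + R x))) F (nhds β) := by
  have h1 : Tendsto (fun x => (1 : ℝ) + R x) F atTop := tendsto_atTop_add_const_left _ 1 hR
  have h2 : Tendsto (fun x => (-2 : ℝ) / (1 + R x)) F (nhds 0) :=
    Tendsto.div_atTop tendsto_const_nhds h1
  have h3 : Tendsto (fun x => β * ((1:ℝ) + (-2) / (1 + R x))) F (nhds (β * (1 + 0))) :=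
    (((tendsto_const_nhds : Tendsto (fun _ : α => (1:ℝ)) F (nhds 1)).add h2).const_mul β)
  simpa using h3

lemma inner_eq (β E R : ℝ) (w : ℝ) (k : ℕ) (hE : 0 < E) (hR : 0 < R) (hRE : w = R * E) :
    β * (1 + (-2) / (1 + R)) =
    β * (1 + 2 * (-1 : ℝ) ^ (k + 1) * E / ((-1) ^ k * E + (-1) ^ k * w)) := by
  subst hRE
  have h1 : (0:ℝ) < 1 + R := by linarith
  have h2 : (0:ℝ) < E + R * E := by nlinarith
  rcases neg_one_pow_eq_or ℝ k with hP | hP <;> rw [pow_succ, hP]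
  · field_simp
  · rw [show (-1:ℝ) * E + -1 * (R * E) = -(E + R * E) by ring, div_neg]
    field_simp [h2.ne']



/-- Zero-Derivative Principle in boundary-value form for the linear
model: the solution z of the linear model determined by z₂(t_f) = β and
∂_t^m z₁(t₀) = 0 exists, is unique, and satisfies
z₁(t_f) = β·[1 + 2(−1)^{m+1}e^{(−1−γ)t_f}/((−1)^m e^{(−1−γ)t_f} + (−1−γ)^m e^{−γt₀}e^{−t_f})];
moreover z₁(t_f) → β as m → ∞, as t₀ → −∞, and as γ → ∞. -/
theorem stmt18 (γ : ℝ) (hγ : 0 < γ) (m : ℕ) (hm : 1 ≤ m) (t₀ tf β : ℝ)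
    (ht : t₀ < tf) (hβ : β ≠ 0) :
    (∃! z : (ℝ → ℝ) × (ℝ → ℝ),
      (∀ t : ℝ,
        HasDerivAt z.1 ((-1 - γ / 2) * z.1 t + (γ / 2) * z.2 t) t ∧
        HasDerivAt z.2 ((γ / 2) * z.1 t + (-1 - γ / 2) * z.2 t) t) ∧
      z.2 tf = β ∧ iteratedDeriv m z.1 t₀ = 0) ∧
    (∀ z₁ z₂ : ℝ → ℝ,
      (∀ t : ℝ,
        HasDerivAt z₁ ((-1 - γ / 2) * z₁ t + (γ / 2) * z₂ t) t ∧
        HasDerivAt z₂ ((γ / 2) * z₁ t + (-1 - γ / 2) * z₂ t) t) →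
      z₂ tf = β → iteratedDeriv m z₁ t₀ = 0 →
      z₁ tf = β * (1 + 2 * (-1 : ℝ) ^ (m + 1) * exp ((-1 - γ) * tf)
        / ((-1 : ℝ) ^ m * exp ((-1 - γ) * tf)
            + (-1 - γ) ^ m * exp (-γ * t₀) * exp (-tf)))) ∧
    Tendsto (fun k : ℕ => β * (1 + 2 * (-1 : ℝ) ^ (k + 1) * exp ((-1 - γ) * tf)
        / ((-1 : ℝ) ^ k * exp ((-1 - γ) * tf)
            + (-1 - γ) ^ k * exp (-γ * t₀) * exp (-tf)))) atTop (nhds β) ∧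
    Tendsto (fun s : ℝ => β * (1 + 2 * (-1 : ℝ) ^ (m + 1) * exp ((-1 - γ) * tf)
        / ((-1 : ℝ) ^ m * exp ((-1 - γ) * tf)
            + (-1 - γ) ^ m * exp (-γ * s) * exp (-tf)))) atBot (nhds β) ∧
    Tendsto (fun g : ℝ => β * (1 + 2 * (-1 : ℝ) ^ (m + 1) * exp ((-1 - g) * tf)
        / ((-1 : ℝ) ^ m * exp ((-1 - g) * tf)
            + (-1 - g) ^ m * exp (-g * t₀) * exp (-tf)))) atTop (nhds β) := by
  have hQm : ((-1 - γ : ℝ)) ^ m = (-1 : ℝ) ^ m * (1 + γ) ^ m := by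
    rw [show (-1 - γ : ℝ) = (-1) * (1 + γ) by ring, mul_pow]
  have hEf : exp ((-1 - γ) * tf) = exp (-γ * tf) * exp (-tf) := by
    rw [← exp_add]; congr 1; ring
  have hE0 : exp ((-1 - γ) * t₀) = exp (-γ * t₀) * exp ((-1) * t₀) := by
    rw [← exp_add]; congr 1; ring
  set D : ℝ := (-1 : ℝ) ^ m * exp ((-1 - γ) * tf) + (-1 - γ) ^ m * exp (-γ * t₀) * exp (-tf)
    with hD
  have hDne : D ≠ 0 := by
    have hfac : D = (-1 : ℝ) ^ m
        * (exp ((-1 - γ) * tf) + (1 + γ) ^ m * (exp (-γ * t₀) * exp (-tf))) := by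
      rw [hD, hQm]; ring
    rw [hfac]
    exact mul_ne_zero (pow_ne_zero _ (by norm_num)) (by positivity)
  set b0 : ℝ := β * (-1 : ℝ) ^ (m + 1) / D with hb0
  set a0 : ℝ := -((-1 : ℝ) ^ m) * (-1 - γ) ^ m * b0 * exp (-γ * t₀) with ha0
  have he : ∀ r t : ℝ, HasDerivAt (fun t : ℝ => exp (r * t)) (exp (r * t) * r) t := by
    intro r t
    simpa using ((hasDerivAt_id t).const_mul r).exp
  -- master lemma
  have master : ∀ z₁ z₂ : ℝ → ℝ,
      (∀ t, HasDerivAt z₁ ((-1 - γ / 2) * z₁ t + (γ / 2) * z₂ t) t ∧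
            HasDerivAt z₂ ((γ / 2) * z₁ t + (-1 - γ / 2) * z₂ t) t) →
      z₂ tf = β → iteratedDeriv m z₁ t₀ = 0 →
      ∀ t, z₁ t = a0 * exp ((-1) * t) + b0 * exp ((-1 - γ) * t) ∧
           z₂ t = a0 * exp ((-1) * t) - b0 * exp ((-1 - γ) * t) := by
    intro z₁ z₂ hz h2f h1d
    obtain ⟨a, b, hab⟩ := rep γ z₁ z₂ hz
    have hz1 : z₁ = fun t => a * exp ((-1) * t) + b * exp ((-1 - γ) * t) :=
      funext fun t => (hab t).1
    rw [hz1, iter2, hE0] at h1d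
    have h2' : a * (-1 : ℝ) ^ m + b * (-1 - γ) ^ m * exp (-γ * t₀) = 0 := by
      have hx : exp ((-1) * t₀) ≠ 0 := exp_ne_zero _
      have h0 : (a * (-1 : ℝ) ^ m + b * (-1 - γ) ^ m * exp (-γ * t₀)) * exp ((-1) * t₀) = 0 := by
        linear_combination h1d
      rcases mul_eq_zero.1 h0 with h | h
      · exact h
      · exact absurd h hx
    have h2ftf : a * exp ((-1) * tf) - b * exp ((-1 - γ) * tf) = β := by
      rw [← (hab tf).2]; exact h2f
    rw [show ((-1 : ℝ)) * tf = -tf by ring, hEf] at h2ftf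
    rw [hQm] at h2'
    have hb : b = b0 := by
      rw [hb0, eq_div_iff hDne, hD, hEf, hQm, pow_succ]
      rcases neg_one_pow_eq_or ℝ m with hP | hP <;> rw [hP] at h2' ⊢
      · linear_combination -h2ftf + exp (-tf) * h2'
      · linear_combination h2ftf + exp (-tf) * h2'
    have ha : a = a0 := by
      rw [ha0, ← hb, hQm]
      rcases neg_one_pow_eq_or ℝ m with hP | hP <;> rw [hP] at h2' ⊢
      · linear_combination h2'
      · linear_combination -h2'
    intro t
    refine ⟨?_, ?_⟩
    · rw [(hab t).1, ha, hb]
    · rw [(hab t).2, ha, hb]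
  refine ⟨⟨(⟨fun t => a0 * exp ((-1) * t) + b0 * exp ((-1 - γ) * t),
            fun t => a0 * exp ((-1) * t) - b0 * exp ((-1 - γ) * t)⟩ : (ℝ → ℝ) × (ℝ → ℝ)),
          ⟨fun t => ⟨?_, ?_⟩, ?_, ?_⟩, fun y hy => ?_⟩,
        fun z₁ z₂ hz h2 h1 => ?_, ?_, ?_, ?_⟩
  · -- ODE for z.1
    have h := ((he (-1) t).const_mul a0).add ((he (-1 - γ) t).const_mul b0)
    exact h.congr_deriv (by ring)
  · -- ODE for z.2
    have h := ((he (-1) t).const_mul a0).sub ((he (-1 - γ) t).const_mul b0)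
    exact h.congr_deriv (by ring)
  · -- z.2 tf = β
    show a0 * exp ((-1) * tf) - b0 * exp ((-1 - γ) * tf) = β
    rw [ha0, hb0]
    field_simp
    rw [hD, hEf, hQm, pow_succ]
    rcases neg_one_pow_eq_or ℝ m with hP | hP <;> rw [hP] <;> ring_nf
  · -- iterated deriv = 0
    show iteratedDeriv m (fun t => a0 * exp ((-1) * t) + b0 * exp ((-1 - γ) * t)) t₀ = 0
    rw [iter2, hE0, ha0, hQm]
    rcases neg_one_pow_eq_or ℝ m with hP | hP <;> rw [hP] <;> ring
  · -- uniqueness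
    obtain ⟨hyode, hy2, hy1⟩ := hy
    have h := master y.1 y.2 hyode hy2 hy1
    exact Prod.ext (funext fun t => (h t).1) (funext fun t => (h t).2)
  · -- formula
    have h := (master z₁ z₂ hz h2 h1 tf).1
    rw [h, ha0, hb0]
    field_simp
    rw [hD, hEf, hQm, pow_succ]
    rcases neg_one_pow_eq_or ℝ m with hP | hP <;> rw [hP] <;> ring_nf
  · -- limit in m
    have hRt : Tendsto (fun k : ℕ => (1 + γ) ^ k * (exp (γ * tf) * exp (-γ * t₀)))
        atTop atTop :=
      Tendsto.atTop_mul_const (by positivity) (tendsto_pow_atTop_atTop_of_one_lt (by linarith))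
    refine (lim_helper β _ hRt).congr fun k => ?_
    have hx : exp (γ * tf) * exp ((-1 - γ) * tf) = exp (-tf) := by
      rw [← exp_add]; congr 1; ring
    have hQk : ((-1 - γ : ℝ)) ^ k = (-1 : ℝ) ^ k * (1 + γ) ^ k := by
      rw [show (-1 - γ : ℝ) = (-1) * (1 + γ) by ring, mul_pow]
    rw [hQk]
    have key := inner_eq β (exp ((-1 - γ) * tf))
      ((1 + γ) ^ k * (exp (γ * tf) * exp (-γ * t₀)))
      ((1 + γ) ^ k * exp (-γ * t₀) * exp (-tf)) k (exp_pos _)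
      (by positivity)
      (by linear_combination (-((1 + γ) ^ k * exp (-γ * t₀))) * hx)
    linear_combination key
  · -- limit in t₀ → -∞
    have h1 : Tendsto (fun s : ℝ => -γ * s) atBot atTop := by
      have := ((tendsto_neg_atBot_atTop : Tendsto (fun x : ℝ => -x) atBot atTop)).const_mul_atTop hγ
      refine this.congr fun s => by ring
    have hRt : Tendsto (fun s : ℝ => ((1 + γ) ^ m * exp (γ * tf)) * exp (-γ * s))
        atBot atTop :=
      (tendsto_exp_atTop.comp h1).const_mul_atTop (by positivity)
    refine (lim_helper β _ hRt).congr fun s => ?_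
    have hx : exp (γ * tf) * exp ((-1 - γ) * tf) = exp (-tf) := by
      rw [← exp_add]; congr 1; ring
    rw [hQm]
    have key := inner_eq β (exp ((-1 - γ) * tf))
      (((1 + γ) ^ m * exp (γ * tf)) * exp (-γ * s))
      ((1 + γ) ^ m * exp (-γ * s) * exp (-tf)) m (exp_pos _)
      (by positivity)
      (by linear_combination (-((1 + γ) ^ m * exp (-γ * s))) * hx)
    linear_combination key
  · -- limit in γ → ∞
    have h1 : Tendsto (fun g : ℝ => 1 + g) atTop atTop :=
      tendsto_atTop_add_const_left _ 1 tendsto_id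
    have h2 : Tendsto (fun g : ℝ => (1 + g) ^ m) atTop atTop :=
      (tendsto_pow_atTop (by omega : m ≠ 0)).comp h1
    have h3 : Tendsto (fun g : ℝ => g * (tf - t₀)) atTop atTop :=
      tendsto_id.atTop_mul_const (by linarith)
    have h4 : Tendsto (fun g : ℝ => exp (g * (tf - t₀))) atTop atTop :=
      tendsto_exp_atTop.comp h3
    have hRt : Tendsto (fun g : ℝ => (1 + g) ^ m * exp (g * (tf - t₀))) atTop atTop :=
      h2.atTop_mul_atTop₀ h4
    refine (lim_helper β _ hRt).congr' ?_
    filter_upwards [eventually_gt_atTop (0 : ℝ)] with g hg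
    have hgp : (0:ℝ) < 1 + g := by linarith
    have hx : exp (g * (tf - t₀)) * exp ((-1 - g) * tf) = exp (-g * t₀) * exp (-tf) := by
      rw [← exp_add, ← exp_add]; congr 1; ring
    have hQg : ((-1 - g : ℝ)) ^ m = (-1 : ℝ) ^ m * (1 + g) ^ m := by
      rw [show (-1 - g : ℝ) = (-1) * (1 + g) by ring, mul_pow]
    rw [hQg]
    have key := inner_eq β (exp ((-1 - g) * tf))
      ((1 + g) ^ m * exp (g * (tf - t₀)))
      ((1 + g) ^ m * exp (-g * t₀) * exp (-tf)) m (exp_pos _)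
      (mul_pos (pow_pos hgp m) (exp_pos _))
      (by linear_combination (-((1 + g) ^ m)) * hx)
    linear_combination key
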